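/- Fix T > 0, m > 0, a > 0, η > 0 and σ ∈ ℝ, and let w : [0, T] → ℝ be continuous and strictly positive on [0, T) with ∫₀ᵀ w_s^(1/m) ds < ∞. Define A_{η,t} = (η^(1/m) + (1/(m+1)) ∫ₜᵀ w_s^(1/m) ds)^(−m) and C_{η,t} = a ∫ₜᵀ A_{η,s} ds, and set φ(t, x) = A_{η,t}·x + C_{η,t}. Then φ(T, x) = x/η for all x ≥ 0, and for all t ∈ (0, T) and x ≥ 0, ∂φ/∂t (t,x) + a·∂φ/∂x (t,x) + x · inf_{v ≥ 0} { −v·∂φ/∂x (t,x) + (σ²/2)·v·∂²φ/∂x² (t,x) + (1/w_t)·v^(m+1)/(m+1) } = 0. -/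

import Mathlib

open Real MeasureTheory Set Filter

lemma aux_inf (m b c : ℝ) (hm : 0 < m) (hb : 0 < b) (hc : 0 < c) :
    sInf {z : ℝ | ∃ v : ℝ, 0 ≤ v ∧ z = -v * b + c * v ^ (m + 1) / (m + 1)}
      = -(m / (m + 1)) * b ^ ((m + 1) / m) * c ^ (-(1 / m)) := by
  have hm1 : (0:ℝ) < m + 1 := by linarith
  set v₀ : ℝ := (b / c) ^ (1 / m) with hv₀
  have hbc : 0 < b / c := div_pos hb hc
  have hv₀pos : 0 < v₀ := Real.rpow_pos_of_pos hbc _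
  have hv₀m : v₀ ^ m = b / c := by
    rw [hv₀, ← Real.rpow_mul hbc.le]
    rw [show (1 / m) * m = 1 by field_simp, Real.rpow_one]
  have hcv : c * v₀ ^ (m + 1) = b * v₀ := by
    rw [Real.rpow_add hv₀pos m 1, Real.rpow_one, hv₀m]
    field_simp
  have hval : -v₀ * b + c * v₀ ^ (m + 1) / (m + 1)
      = -(m / (m + 1)) * b ^ ((m + 1) / m) * c ^ (-(1 / m)) := by
    have h1 : v₀ * b = b ^ ((m + 1) / m) * c ^ (-(1 / m)) := by
      rw [hv₀, Real.div_rpow hb.le hc.le, Real.rpow_neg hc.le,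
        show (m + 1) / m = 1 / m + 1 by field_simp; ring, Real.rpow_add hb, Real.rpow_one]
      ring
    rw [hcv, show -v₀ * b + b * v₀ / (m + 1) = -(m / (m + 1)) * (v₀ * b) by
      field_simp [hm1.ne']; ring, h1]
    ring
  have key : ∀ v : ℝ, 0 ≤ v →
      -v₀ * b + c * v₀ ^ (m + 1) / (m + 1) ≤ -v * b + c * v ^ (m + 1) / (m + 1) := by
    intro v hv
    set u : ℝ := v / v₀ with hu
    have hu0 : 0 ≤ u := div_nonneg hv hv₀pos.le
    have hvu : v = u * v₀ := by rw [hu, div_mul_cancel₀ v hv₀pos.ne']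
    have hber : (m + 1) * u - m ≤ u ^ (m + 1) := by
      have := one_add_mul_self_le_rpow_one_add (by linarith : (-1:ℝ) ≤ u - 1)
        (by linarith : (1:ℝ) ≤ m + 1)
      have h2 : 1 + (u - 1) = u := by ring
      rw [h2] at this
      linarith
    have hvp : v ^ (m + 1) = u ^ (m + 1) * v₀ ^ (m + 1) := by
      rw [hvu, Real.mul_rpow hu0 hv₀pos.le]
    rw [hvp, hvu]
    have hc2 : c * (u ^ (m + 1) * v₀ ^ (m + 1)) = u ^ (m + 1) * (b * v₀) := by
      rw [← mul_assoc, mul_comm c (u ^ (m + 1)), mul_assoc, hcv]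
    rw [hc2, hcv]
    have hid : -(u * v₀) * b + u ^ (m + 1) * (b * v₀) / (m + 1)
        - (-v₀ * b + b * v₀ / (m + 1))
        = b * v₀ / (m + 1) * (u ^ (m + 1) - ((m + 1) * u - m)) := by
      field_simp [hm1.ne']
      ring
    have hpn := mul_nonneg (div_nonneg (mul_nonneg hb.le hv₀pos.le) hm1.le)
      (sub_nonneg.2 hber)
    linarith [hid, hpn]
  have hleast : IsLeast {z : ℝ | ∃ v : ℝ, 0 ≤ v ∧ z = -v * b + c * v ^ (m + 1) / (m + 1)}
      (-v₀ * b + c * v₀ ^ (m + 1) / (m + 1)) := by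
    constructor
    · exact ⟨v₀, hv₀pos.le, rfl⟩
    · rintro z ⟨v, hv, rfl⟩
      exact key v hv
  rw [hleast.csInf_eq, hval]

lemma aux_primitive {f : ℝ → ℝ} {T t : ℝ} (htT : t < T)
    (hfi : IntervalIntegrable f volume t T)
    (hmeas : StronglyMeasurableAtFilter f (nhds t))
    (hcont : ContinuousAt f t) :
    HasDerivAt (fun u => ∫ s in Ioo u T, f s) (-(f t)) t := by
  have hJ : HasDerivAt (fun u => ∫ s in T..u, f s) (f t) t :=
    intervalIntegral.integral_hasDerivAt_right hfi.symm hmeas hcont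
  refine HasDerivAt.congr_of_eventuallyEq hJ.neg ?_
  filter_upwards [Iio_mem_nhds htT] with u (hu : u < T)
  rw [Pi.neg_apply, ← intervalIntegral.integral_symm, intervalIntegral.integral_of_le hu.le,
    MeasureTheory.integral_Ioc_eq_integral_Ioo]

/-- The affine function `φ(t,x) = A_{η,t}x + C_{η,t}`, with
`A_{η,t} = (η^(1/m) + (1/(m+1))∫ₜᵀ w_s^(1/m) ds)^(−m)` and `C_{η,t} = a∫ₜᵀ A_{η,s} ds`,
satisfies the terminal condition `φ(T,x) = x/η` and is an explicit classical solution of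
the Hamilton–Jacobi–Bellman equation
`∂φ/∂t + a·∂φ/∂x + x·inf_{v ≥ 0}{−v·∂φ/∂x + (σ²/2)v·∂²φ/∂x² + (1/w_t)v^(m+1)/(m+1)} = 0`
on `(0,T) × [0,∞)`. -/
theorem stmt_18 (T m a η σ : ℝ) (hT : 0 < T) (hm : 0 < m) (ha : 0 < a) (hη : 0 < η)
    (w : ℝ → ℝ) (hw_cont : ContinuousOn w (Icc 0 T))
    (hw_pos : ∀ t ∈ Ico (0 : ℝ) T, 0 < w t)
    (hw_int : IntegrableOn (fun s => w s ^ (1 / m)) (Ioo 0 T))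
    (A C : ℝ → ℝ)
    (hA : ∀ t : ℝ, A t =
      (η ^ (1 / m) + (1 / (m + 1)) * ∫ s in Ioo t T, w s ^ (1 / m)) ^ (-m))
    (hC : ∀ t : ℝ, C t = a * ∫ s in Ioo t T, A s)
    (φ : ℝ → ℝ → ℝ) (hφ : ∀ t x : ℝ, φ t x = A t * x + C t) :
    (∀ x : ℝ, 0 ≤ x → φ T x = x / η) ∧
      ∀ t ∈ Ioo (0 : ℝ) T, ∀ x : ℝ, 0 ≤ x →
        deriv (fun τ => φ τ x) t + a * deriv (fun y => φ t y) x
          + x * sInf {z : ℝ | ∃ v : ℝ, 0 ≤ v ∧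
              z = -v * deriv (fun y => φ t y) x
                + σ ^ 2 / 2 * v * deriv (deriv (fun y => φ t y)) x
                + (1 / w t) * v ^ (m + 1) / (m + 1)} = 0 := by
  have hm1 : (0:ℝ) < m + 1 := by linarith
  constructor
  · intro x hx
    have hAT : A T = 1 / η := by
      rw [hA T, Set.Ioo_self, MeasureTheory.setIntegral_empty, mul_zero, add_zero,
        ← Real.rpow_mul hη.le, show (1 / m) * (-m) = -1 by field_simp, Real.rpow_neg_one,
        one_div]
    have hCT : C T = 0 := by
      rw [hC T, Set.Ioo_self, MeasureTheory.setIntegral_empty, mul_zero]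
    rw [hφ, hAT, hCT]
    ring
  · intro t ht x hx
    obtain ⟨ht0, htT⟩ := ht
    -- continuity of the integrand
    have hfc : ContinuousOn (fun s => w s ^ (1 / m)) (Ioo 0 T) :=
      (hw_cont.mono Ioo_subset_Icc_self).rpow_const
        (fun s hs => Or.inl (hw_pos s (Ioo_subset_Ico_self hs)).ne')
    -- interval integrability of the integrand
    have hfint : ∀ u ∈ Icc (0:ℝ) T, IntervalIntegrable (fun s => w s ^ (1 / m)) volume u T := by
      intro u hu
      rw [intervalIntegrable_iff_integrableOn_Ioc_of_le hu.2,
        integrableOn_Ioc_iff_integrableOn_Ioo]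
      exact hw_int.mono_set (Ioo_subset_Ioo hu.1 le_rfl)
    -- positivity of the base
    have hgpos : ∀ u : ℝ, 0 ≤ u →
        0 < η ^ (1 / m) + (1 / (m + 1)) * ∫ s in Ioo u T, w s ^ (1 / m) := by
      intro u hu
      have h1 : (0:ℝ) ≤ ∫ s in Ioo u T, w s ^ (1 / m) := by
        apply MeasureTheory.setIntegral_nonneg measurableSet_Ioo
        intro s hs
        exact Real.rpow_nonneg (hw_pos s ⟨le_trans hu hs.1.le, hs.2⟩).le _
      have h2 : (0:ℝ) < η ^ (1 / m) := Real.rpow_pos_of_pos hη _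
      have h3 : (0:ℝ) ≤ (1 / (m + 1)) * ∫ s in Ioo u T, w s ^ (1 / m) :=
        mul_nonneg (by positivity) h1
      linarith
    have hA' : A = fun u =>
        (η ^ (1 / m) + (1 / (m + 1)) * ∫ s in Ioo u T, w s ^ (1 / m)) ^ (-m) := funext hA
    -- derivative of A at any point of Ioo 0 T
    have hAderiv : ∀ u ∈ Ioo (0:ℝ) T, HasDerivAt A
        ((1 / (m + 1) * -(w u ^ (1 / m))) * (-m) *
          (η ^ (1 / m) + (1 / (m + 1)) * ∫ s in Ioo u T, w s ^ (1 / m)) ^ (-m - 1)) u := by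
      intro u hu
      have hIu : HasDerivAt (fun r => ∫ s in Ioo r T, w s ^ (1 / m)) (-(w u ^ (1 / m))) u :=
        aux_primitive hu.2 (hfint u ⟨hu.1.le, hu.2.le⟩)
          (hfc.stronglyMeasurableAtFilter isOpen_Ioo u hu)
          (hfc.continuousAt (isOpen_Ioo.mem_nhds hu))
      have hgu : HasDerivAt
          (fun r => η ^ (1 / m) + (1 / (m + 1)) * ∫ s in Ioo r T, w s ^ (1 / m))
          (1 / (m + 1) * -(w u ^ (1 / m))) u := (hIu.const_mul _).const_add _
      have := hgu.rpow_const (p := -m) (Or.inl (hgpos u hu.1.le).ne')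
      rw [hA']
      exact this
    have hApos : ∀ u : ℝ, 0 ≤ u → 0 < A u := by
      intro u hu
      rw [hA u]
      exact Real.rpow_pos_of_pos (hgpos u hu) _
    -- A is continuous on Ioo 0 T
    have hA_cont : ContinuousOn A (Ioo 0 T) := fun u hu =>
      ((hAderiv u hu).continuousAt).continuousWithinAt
    -- A is bounded, hence integrable on Ioo t T
    have hA_bdd : ∀ u ∈ Ioo t T, ‖A u‖ ≤ (η ^ (1 / m)) ^ (-m) := by
      intro u hu
      have hu0 : (0:ℝ) ≤ u := le_trans ht0.le hu.1.le
      rw [Real.norm_eq_abs, abs_of_pos (hApos u hu0), hA u]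
      exact Real.rpow_le_rpow_of_nonpos (Real.rpow_pos_of_pos hη _)
        (le_add_of_nonneg_right (by
          have h1 : (0:ℝ) ≤ ∫ s in Ioo u T, w s ^ (1 / m) := by
            apply MeasureTheory.setIntegral_nonneg measurableSet_Ioo
            intro s hs
            exact Real.rpow_nonneg (hw_pos s ⟨le_trans hu0 hs.1.le, hs.2⟩).le _
          positivity)) (by linarith)
    have hA_int : IntegrableOn A (Ioo t T) := by
      refine ⟨(hA_cont.mono (Ioo_subset_Ioo ht0.le le_rfl)).aestronglyMeasurable
        measurableSet_Ioo, ?_⟩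
      exact HasFiniteIntegral.restrict_of_bounded (C := (η ^ (1 / m)) ^ (-m))
        measure_Ioo_lt_top ((ae_restrict_iff' measurableSet_Ioo).2 (ae_of_all _ hA_bdd))
    have hA_ii : IntervalIntegrable A volume t T := by
      rw [intervalIntegrable_iff_integrableOn_Ioc_of_le htT.le,
        integrableOn_Ioc_iff_integrableOn_Ioo]
      exact hA_int
    -- derivative of C
    have hC_deriv : HasDerivAt C (a * -(A t)) t := by
      have h1 : HasDerivAt (fun u => ∫ s in Ioo u T, A s) (-(A t)) t :=
        aux_primitive htT hA_ii (hA_cont.stronglyMeasurableAtFilter isOpen_Ioo t ⟨ht0, htT⟩)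
          ((hAderiv t ⟨ht0, htT⟩).continuousAt)
      have h2 := h1.const_mul a
      rw [show C = fun u => a * ∫ s in Ioo u T, A s from funext hC]
      exact h2
    -- space derivatives
    have hderiv1 : deriv (fun y => φ t y) = fun _ => A t := by
      funext y
      rw [show (fun y => φ t y) = fun y => A t * y + C t from funext (hφ t)]
      have h1 : HasDerivAt (fun y : ℝ => A t * y + C t) (A t) y := by
        simpa using ((hasDerivAt_id y).const_mul (A t)).add_const (C t)
      exact h1.deriv
    -- time derivative
    have hφt : HasDerivAt (fun τ => φ τ x)
        ((1 / (m + 1) * -(w t ^ (1 / m))) * (-m) *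
          (η ^ (1 / m) + (1 / (m + 1)) * ∫ s in Ioo t T, w s ^ (1 / m)) ^ (-m - 1) * x
          + a * -(A t)) t := by
      rw [show (fun τ => φ τ x) = fun τ => A τ * x + C τ from funext (fun τ => hφ τ x)]
      exact ((hAderiv t ⟨ht0, htT⟩).mul_const x).add hC_deriv
    rw [hφt.deriv]
    simp only [hderiv1, deriv_const', mul_zero, add_zero]
    have hwt : 0 < w t := hw_pos t ⟨ht0.le, htT⟩
    rw [aux_inf m (A t) (1 / w t) hm (hApos t ht0.le) (by positivity)]
    have hpow1 : (1 / w t) ^ (-(1 / m)) = w t ^ (1 / m) := by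
      rw [one_div, Real.inv_rpow hwt.le, Real.rpow_neg hwt.le, inv_inv]
    have hpow2 : (A t) ^ ((m + 1) / m)
        = (η ^ (1 / m) + (1 / (m + 1)) * ∫ s in Ioo t T, w s ^ (1 / m)) ^ (-m - 1) := by
      rw [hA t, ← Real.rpow_mul (hgpos t ht0.le).le,
        show (-m) * ((m + 1) / m) = -m - 1 by field_simp; ring]
    rw [hpow1, hpow2]
    ring
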